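/- Let a finite family of circles with centers p : C → ℝ² and radii r : C → ℝ, r c > 0, be packed into the disk of radius R > 0 centered at the origin, and let c₁, c₂ ∈ C be two distinct indices. Then there exists a linear isometry T : ℝ² → ℝ² such that the circles with centers T ∘ p and radii r are again packed into the disk of radius R centered at the origin, the point T (p c₁) has both coordinates nonnegative, and the point T (p c₂) = (x₂, y₂) satisfies y₂ ≥ x₂. (This justifies the symmetry-breaking constraints x₁ ≥ 0, y₁ ≥ 0, y₂ ≥ x₂.) -/

import Mathlib

open Complex

/-- Multiplication by `i` as an element of the circle group. -/
noncomputable def iCircle : Circle :=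
  ⟨Complex.I, by simp [Submonoid.unitSphere]⟩

lemma coe_iCircle : (iCircle : ℂ) = Complex.I := rfl

/-- Multiplication by `-i` as an element of the circle group. -/
noncomputable def negICircle : Circle :=
  ⟨-Complex.I, by simp [Submonoid.unitSphere]⟩

lemma coe_negICircle : (negICircle : ℂ) = -Complex.I := rfl

/-- Multiplication by `-1` as an element of the circle group. -/
noncomputable def negOneCircle : Circle :=
  ⟨-1, by simp [Submonoid.unitSphere]⟩

lemma coe_negOneCircle : (negOneCircle : ℂ) = -1 := rfl

/-- For any two complex numbers there is a real-linear isometry of `ℂ` moving the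
first into the closed first quadrant and the second into the half-plane `im ≥ re`. -/
lemma exists_isom (z₁ z₂ : ℂ) :
    ∃ f : ℂ ≃ₗᵢ[ℝ] ℂ, 0 ≤ (f z₁).re ∧ 0 ≤ (f z₁).im ∧ (f z₂).re ≤ (f z₂).im := by
  -- first, a rotation by a power of `i` putting `z₁` into the first quadrant
  have hquad : ∃ g : ℂ ≃ₗᵢ[ℝ] ℂ, (∀ z, (g z).re = z.re ∧ (g z).im = z.im ∨
      (g z).re = -z.im ∧ (g z).im = z.re ∨
      (g z).re = -z.re ∧ (g z).im = -z.im ∨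
      (g z).re = z.im ∧ (g z).im = -z.re) ∧ 0 ≤ (g z₁).re ∧ 0 ≤ (g z₁).im := by
    rcases le_or_gt 0 z₁.re with h1 | h1 <;> rcases le_or_gt 0 z₁.im with h2 | h2
    · exact ⟨LinearIsometryEquiv.refl ℝ ℂ, fun z => Or.inl ⟨rfl, rfl⟩, h1, h2⟩
    · -- re ≥ 0, im < 0 : multiply by i
      refine ⟨rotation iCircle, fun z => ?_, ?_, ?_⟩
      · right; left
        simp [rotation_apply, coe_iCircle, Complex.mul_re, Complex.mul_im]
      · simp [rotation_apply, coe_iCircle, Complex.mul_re]; linarith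
      · simp [rotation_apply, coe_iCircle, Complex.mul_im]; linarith
    · -- re < 0, im ≥ 0 : multiply by -i
      refine ⟨rotation negICircle, fun z => ?_, ?_, ?_⟩
      · right; right; right
        simp [rotation_apply, coe_negICircle, Complex.mul_re, Complex.mul_im]
      · simp [rotation_apply, coe_negICircle, Complex.mul_re]; linarith
      · simp [rotation_apply, coe_negICircle, Complex.mul_im]; linarith
    · -- re < 0, im < 0 : multiply by -1
      refine ⟨rotation negOneCircle, fun z => ?_, ?_, ?_⟩
      · right; right; left
        simp [rotation_apply, coe_negOneCircle, Complex.mul_re, Complex.mul_im]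
      · simp [rotation_apply, coe_negOneCircle, Complex.mul_re]; linarith
      · simp [rotation_apply, coe_negOneCircle, Complex.mul_im]; linarith
  obtain ⟨g, hg, h1, h2⟩ := hquad
  rcases le_or_gt (g z₂).re (g z₂).im with h3 | h3
  · exact ⟨g, h1, h2, h3⟩
  · -- compose with reflection across the diagonal: z ↦ i * conj z, i.e. (x, y) ↦ (y, x)
    refine ⟨g.trans (Complex.conjLIE.trans (rotation iCircle)), ?_, ?_, ?_⟩ <;>
      simp [rotation_apply, coe_iCircle, Complex.conjLIE_apply, Complex.mul_re,
        Complex.mul_im] <;> linarith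

/-- Symmetry breaking: given a packing into the disk of radius `R` centered at the
origin and two distinct indices `c₁, c₂`, there is a linear isometry `T` of the plane
mapping the packing to another packing into the same disk, such that `T (p c₁)` has
both coordinates nonnegative and `T (p c₂) = (x₂, y₂)` satisfies `y₂ ≥ x₂`. -/
theorem symmetry_breaking {C : Type*} [Fintype C]
    (p : C → EuclideanSpace ℝ (Fin 2)) (r : C → ℝ) (R : ℝ)
    (hR : 0 < R) (hr : ∀ c, 0 < r c)
    (hin : ∀ c, ‖p c‖ ≤ R - r c)
    (hsep : ∀ c k, c ≠ k → r c + r k ≤ ‖p c - p k‖)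
    (c₁ c₂ : C) (hne : c₁ ≠ c₂) :
    ∃ T : EuclideanSpace ℝ (Fin 2) →ₗᵢ[ℝ] EuclideanSpace ℝ (Fin 2),
      (∀ c, ‖T (p c)‖ ≤ R - r c) ∧
      (∀ c k, c ≠ k → r c + r k ≤ ‖T (p c) - T (p k)‖) ∧
      0 ≤ T (p c₁) 0 ∧ 0 ≤ T (p c₁) 1 ∧
      T (p c₂) 0 ≤ T (p c₂) 1 := by
  set e : ℂ ≃ₗᵢ[ℝ] EuclideanSpace ℝ (Fin 2) :=
    Complex.isometryOfOrthonormal (EuclideanSpace.basisFun (Fin 2) ℝ) with he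
  obtain ⟨f, hf1, hf2, hf3⟩ := exists_isom (e.symm (p c₁)) (e.symm (p c₂))
  set T : EuclideanSpace ℝ (Fin 2) ≃ₗᵢ[ℝ] EuclideanSpace ℝ (Fin 2) :=
    (e.symm.trans f).trans e with hT
  have hcoord : ∀ x : EuclideanSpace ℝ (Fin 2),
      T x 0 = (f (e.symm x)).re ∧ T x 1 = (f (e.symm x)).im := by
    intro x
    have : T x = e (f (e.symm x)) := rfl
    rw [this, he, Complex.isometryOfOrthonormal_apply]
    constructor <;> simp [EuclideanSpace.basisFun_apply, EuclideanSpace.single_apply]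
  refine ⟨T.toLinearIsometry, fun c => ?_, fun c k hck => ?_, ?_, ?_, ?_⟩
  · have : ‖T.toLinearIsometry (p c)‖ = ‖p c‖ := T.toLinearIsometry.norm_map _
    rw [this]; exact hin c
  · have h : T.toLinearIsometry (p c) - T.toLinearIsometry (p k)
        = T.toLinearIsometry (p c - p k) := (map_sub _ _ _).symm
    rw [h, T.toLinearIsometry.norm_map]
    exact hsep c k hck
  · have := (hcoord (p c₁)).1
    simp only [LinearIsometryEquiv.coe_toLinearIsometry]
    rw [this]; exact hf1
  · have := (hcoord (p c₁)).2
    simp only [LinearIsometryEquiv.coe_toLinearIsometry]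
    rw [this]; exact hf2
  · have h0 := (hcoord (p c₂)).1
    have h1 := (hcoord (p c₂)).2
    simp only [LinearIsometryEquiv.coe_toLinearIsometry]
    rw [h0, h1]; exact hf3
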